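/- Let s ≥ 2 be an integer, m_i, n_i positive integers for 1 ≤ i ≤ s, a = (a_1,…,a_s) ∈ (0,∞)^s, and Θ = (θ_1,…,θ_s) ∈ M. Then Θ is jointly a-singular if and only if limsup_{t→∞} min_{1≤i≤s} h_{θ_i,1}(a_i t) = −∞. -/

import Mathlib

noncomputable section

/-- `QSet m n θ ε` is the set `𝒬_ε(θ)` of real numbers `Q ≥ 1` for which there exists
`(p, q) ∈ ℤ^m × ℤ^n` with `‖θq − p‖^m < ε Q⁻¹` and `0 < ‖q‖^n ≤ Q` (sup norm). -/
def QSet (m n : ℕ) (θ : Fin m → Fin n → ℝ) (ε : ℝ) : Set ℝ :=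
  {Q : ℝ | 1 ≤ Q ∧ ∃ (p : Fin m → ℤ) (q : Fin n → ℤ),
    ‖(fun k => (∑ j, θ k j * (q j : ℝ)) - (p k : ℝ) : Fin m → ℝ)‖ ^ m < ε * Q⁻¹ ∧
    0 < ‖(fun j => ((q j : ℝ)) : Fin n → ℝ)‖ ^ n ∧
    ‖(fun j => ((q j : ℝ)) : Fin n → ℝ)‖ ^ n ≤ Q}

/-- `𝒬_{a,ε}(Θ) = ⋃_{i=1}^s {Q^{1/a_i} : Q ∈ 𝒬_ε(θ_i)}`. -/
def QSetW {s : ℕ} (m n : Fin s → ℕ) (a : Fin s → ℝ)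
    (θ : ∀ i, Fin (m i) → Fin (n i) → ℝ) (ε : ℝ) : Set ℝ :=
  ⋃ i, (fun Q : ℝ => Q ^ (1 / a i)) '' QSet (m i) (n i) (θ i) ε

/-- `Θ` is jointly `a`-singular: `𝒬_{a,ε}(Θ)` is a neighborhood of `+∞` for every `ε > 0`. -/
def JointlySingular {s : ℕ} (m n : Fin s → ℕ) (a : Fin s → ℝ)
    (θ : ∀ i, Fin (m i) → Fin (n i) → ℝ) : Prop :=
  ∀ ε > 0, ∃ C : ℝ, Set.Ioi C ⊆ QSetW m n a θ ε

/-- The diagonal matrix `g_t^{(m,n)} = diag(e^{t/m} I_m, e^{-t/n} I_n)`. -/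
def gMat (m n : ℕ) (t : ℝ) : Matrix (Fin (m + n)) (Fin (m + n)) ℝ :=
  Matrix.of fun k l =>
    if (k : ℕ) = (l : ℕ) then
      (if (k : ℕ) < m then Real.exp (t / (m : ℝ)) else Real.exp (-t / (n : ℝ)))
    else 0

/-- The unipotent matrix `u_θ = ((I_m, θ), (0, I_n))`. -/
def uMat (m n : ℕ) (θ : Fin m → Fin n → ℝ) : Matrix (Fin (m + n)) (Fin (m + n)) ℝ :=
  Matrix.of fun k l =>
    if hk : (k : ℕ) < m then
      (if hl : (l : ℕ) < m then (if (k : ℕ) = (l : ℕ) then 1 else 0)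
       else θ ⟨(k : ℕ), hk⟩ ⟨(l : ℕ) - m, by have := l.isLt; omega⟩)
    else (if (k : ℕ) = (l : ℕ) then 1 else 0)

/-- `λ₁(A ℤ^d)`: the first successive minimum (w.r.t. the sup norm) of the lattice `A ℤ^d`. -/
def lambdaOne (d : ℕ) (A : Matrix (Fin d) (Fin d) ℝ) : ℝ :=
  sInf {r : ℝ | ∃ v : Fin d → ℤ, v ≠ 0 ∧ r = ‖A.mulVec (fun j => ((v j : ℝ)))‖}

/-- `h_{θ,1}(t) = log λ₁(g_t^{(m,n)} u_θ ℤ^{m+n})`. -/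
def hOne (m n : ℕ) (θ : Fin m → Fin n → ℝ) (t : ℝ) : ℝ :=
  Real.log (lambdaOne (m + n) (gMat m n t * uMat m n θ))

namespace Stmt14Aux

variable {m n : ℕ}

lemma gMat_mulVec (t : ℝ) (w : Fin (m+n) → ℝ) :
    (gMat m n t).mulVec w = fun k : Fin (m+n) =>
      (if (k:ℕ) < m then Real.exp (t/(m:ℝ)) else Real.exp (-t/(n:ℝ))) * w k := by
  funext k
  simp only [Matrix.mulVec, dotProduct, gMat, Matrix.of_apply]
  rw [Finset.sum_eq_single k]
  · simp
  · intro l _ hl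
    rw [if_neg fun h => hl (Fin.ext h.symm), zero_mul]
  · simp

lemma uMat_mulVec (θ : Fin m → Fin n → ℝ) (x : Fin m → ℝ) (y : Fin n → ℝ) :
    (uMat m n θ).mulVec (Fin.append x y) =
      Fin.append (fun k => x k + ∑ j, θ k j * y j) y := by
  funext k
  simp only [Matrix.mulVec, dotProduct]
  rw [Fin.sum_univ_add]
  cases k using Fin.addCases with
  | left i =>
    rw [Fin.append_left]
    have h1 : ∀ i' : Fin m, uMat m n θ (Fin.castAdd n i) (Fin.castAdd n i') * Fin.append x y (Fin.castAdd n i') = (if i = i' then x i' else 0) := by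
      intro i'
      rw [Fin.append_left]
      simp only [uMat, Matrix.of_apply, Fin.coe_castAdd]
      rw [dif_pos i.isLt, dif_pos i'.isLt]
      by_cases h : i = i'
      · simp [h]
      · rw [if_neg (by simpa [Fin.ext_iff] using h), if_neg h, zero_mul]
    have h2 : ∀ j : Fin n, uMat m n θ (Fin.castAdd n i) (Fin.natAdd m j) * Fin.append x y (Fin.natAdd m j) = θ i j * y j := by
      intro j
      rw [Fin.append_right]
      congr 1
      simp only [uMat, Matrix.of_apply, Fin.coe_castAdd, Fin.coe_natAdd]
      rw [dif_pos i.isLt, dif_neg (by omega)]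
      congr 1 <;> apply Fin.ext <;> simp
    simp only [h1, h2, Finset.sum_ite_eq, Finset.mem_univ, if_true]
  | right j =>
    rw [Fin.append_right]
    have h1 : ∀ i' : Fin m, uMat m n θ (Fin.natAdd m j) (Fin.castAdd n i') * Fin.append x y (Fin.castAdd n i') = 0 := by
      intro i'
      simp only [uMat, Matrix.of_apply, Fin.coe_natAdd, Fin.coe_castAdd]
      rw [dif_neg (by omega), if_neg (by omega), zero_mul]
    have h2 : ∀ j' : Fin n, uMat m n θ (Fin.natAdd m j) (Fin.natAdd m j') * Fin.append x y (Fin.natAdd m j') = (if j = j' then y j' else 0) := by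
      intro j'
      rw [Fin.append_right]
      simp only [uMat, Matrix.of_apply, Fin.coe_natAdd]
      rw [dif_neg (by omega)]
      by_cases h : j = j'
      · simp [h]
      · rw [if_neg (by simpa [Fin.ext_iff] using h), zero_mul, if_neg h]
    simp only [h1, h2, Finset.sum_const_zero, zero_add, Finset.sum_ite_eq, Finset.mem_univ, if_true]

lemma AMat_mulVec (θ : Fin m → Fin n → ℝ) (t : ℝ) (x : Fin m → ℝ) (y : Fin n → ℝ) :
    (gMat m n t * uMat m n θ).mulVec (Fin.append x y) =
      Fin.append (fun k => Real.exp (t/(m:ℝ)) * (x k + ∑ j, θ k j * y j))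
                 (fun j => Real.exp (-t/(n:ℝ)) * y j) := by
  rw [← Matrix.mulVec_mulVec, uMat_mulVec, gMat_mulVec]
  funext k
  cases k using Fin.addCases with
  | left i => rw [Fin.append_left, Fin.append_left]; simp [i.isLt]
  | right j => rw [Fin.append_right, Fin.append_right]; simp

lemma latSet_nonempty (d : ℕ) (hd : 0 < d) (A : Matrix (Fin d) (Fin d) ℝ) :
    {r : ℝ | ∃ v : Fin d → ℤ, v ≠ 0 ∧ r = ‖A.mulVec (fun j => ((v j : ℝ)))‖}.Nonempty := by
  refine ⟨_, fun _ => 1, fun h => ?_, rfl⟩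
  simpa using congrFun h ⟨0, hd⟩

lemma latSet_bdd (d : ℕ) (A : Matrix (Fin d) (Fin d) ℝ) :
    BddBelow {r : ℝ | ∃ v : Fin d → ℤ, v ≠ 0 ∧ r = ‖A.mulVec (fun j => ((v j : ℝ)))‖} := by
  exact ⟨0, by rintro r ⟨v, -, rfl⟩; exact norm_nonneg _⟩

lemma lambdaOne_le (d : ℕ) (A : Matrix (Fin d) (Fin d) ℝ) (v : Fin d → ℤ) (hv : v ≠ 0) :
    lambdaOne d A ≤ ‖A.mulVec (fun j => ((v j : ℝ)))‖ :=
  csInf_le (latSet_bdd d A) ⟨v, hv, rfl⟩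

lemma exists_lt_of_lambdaOne_lt (d : ℕ) (hd : 0 < d) (A : Matrix (Fin d) (Fin d) ℝ) {c : ℝ}
    (h : lambdaOne d A < c) : ∃ v : Fin d → ℤ, v ≠ 0 ∧ ‖A.mulVec (fun j => ((v j : ℝ)))‖ < c := by
  obtain ⟨r, ⟨v, hv, rfl⟩, hr⟩ := exists_lt_of_csInf_lt (latSet_nonempty d hd A) h
  exact ⟨v, hv, hr⟩

lemma le_lambdaOne (d : ℕ) (hd : 0 < d) (A : Matrix (Fin d) (Fin d) ℝ) {c : ℝ}
    (h : ∀ v : Fin d → ℤ, v ≠ 0 → c ≤ ‖A.mulVec (fun j => ((v j : ℝ)))‖) :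
    c ≤ lambdaOne d A := by
  apply le_csInf (latSet_nonempty d hd A)
  rintro r ⟨v, hv, rfl⟩
  exact h v hv

lemma coe_decomp (v : Fin (m + n) → ℤ) :
    (fun j => ((v j : ℝ))) = Fin.append (fun k : Fin m => ((v (Fin.castAdd n k) : ℝ)))
      (fun j : Fin n => ((v (Fin.natAdd m j) : ℝ))) := by
  funext k
  cases k using Fin.addCases with
  | left i => rw [Fin.append_left]
  | right j => rw [Fin.append_right]

lemma lambdaOne_lower (hm : 0 < m) (hn : 0 < n) (θ : Fin m → Fin n → ℝ) (t : ℝ) :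
    min (Real.exp (t/(m:ℝ))) (Real.exp (-t/(n:ℝ))) ≤ lambdaOne (m+n) (gMat m n t * uMat m n θ) := by
  apply le_lambdaOne _ (by omega)
  intro v hv
  rw [coe_decomp v, AMat_mulVec]
  by_cases hq : (fun j : Fin n => v (Fin.natAdd m j)) = 0
  · have hp : ∃ k : Fin m, v (Fin.castAdd n k) ≠ 0 := by
      by_contra hc
      push_neg at hc
      apply hv; funext k
      cases k using Fin.addCases with
      | left i => exact hc i
      | right j => exact congrFun hq j
    obtain ⟨k, hk⟩ := hp
    refine le_trans (min_le_left _ _) (le_trans ?_ (norm_le_pi_norm _ (Fin.castAdd n k)))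
    rw [Fin.append_left, Real.norm_eq_abs]
    have hz : ∀ j : Fin n, ((v (Fin.natAdd m j) : ℝ)) = 0 := by
      intro j; have := congrFun hq j; simp only [Pi.zero_apply] at this
      exact_mod_cast this
    have h1 : (1:ℝ) ≤ |((v (Fin.castAdd n k) : ℝ))| := by
      rw [← Int.cast_abs]; exact_mod_cast Int.one_le_abs hk
    have : |Real.exp (t/(m:ℝ)) * (((v (Fin.castAdd n k) : ℝ)) + ∑ j, θ k j * ((v (Fin.natAdd m j) : ℝ)))|
        = Real.exp (t/(m:ℝ)) * |((v (Fin.castAdd n k) : ℝ))| := by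
      simp only [hz, mul_zero, Finset.sum_const_zero, add_zero, abs_mul, Real.abs_exp]
    rw [this]
    nlinarith [Real.exp_pos (t/(m:ℝ))]
  · obtain ⟨j, hj⟩ := Function.ne_iff.1 hq
    simp only [Pi.zero_apply] at hj
    refine le_trans (min_le_right _ _) (le_trans ?_ (norm_le_pi_norm _ (Fin.natAdd m j)))
    rw [Fin.append_right, Real.norm_eq_abs, abs_mul, Real.abs_exp]
    have h1 : (1:ℝ) ≤ |((v (Fin.natAdd m j) : ℝ))| := by
      rw [← Int.cast_abs]; exact_mod_cast Int.one_le_abs hj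
    nlinarith [Real.exp_pos (-t/(n:ℝ))]

lemma lambdaOne_pos (hm : 0 < m) (hn : 0 < n) (θ : Fin m → Fin n → ℝ) (t : ℝ) :
    0 < lambdaOne (m+n) (gMat m n t * uMat m n θ) :=
  lt_of_lt_of_le (lt_min (Real.exp_pos _) (Real.exp_pos _)) (lambdaOne_lower hm hn θ t)

lemma hOne_le (hm : 0 < m) (hn : 0 < n) (θ : Fin m → Fin n → ℝ) (τ δ : ℝ) (hδ : 0 < δ)
    (p : Fin m → ℤ) (q : Fin n → ℤ) (hq : q ≠ 0)
    (h1 : ∀ k, Real.exp (τ/(m:ℝ)) * |(∑ j, θ k j * ((q j : ℝ))) - ((p k : ℝ))| ≤ δ)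
    (h2 : ∀ j, Real.exp (-τ/(n:ℝ)) * |((q j : ℝ))| ≤ δ) :
    hOne m n θ τ ≤ Real.log δ := by
  apply Real.log_le_log (lambdaOne_pos hm hn θ τ)
  set v : Fin (m+n) → ℤ := Fin.append (fun k => -p k) q with hv
  have hvne : v ≠ 0 := by
    obtain ⟨j, hj⟩ := Function.ne_iff.1 hq
    intro hc
    apply hj
    have := congrFun hc (Fin.natAdd m j)
    rwa [hv, Fin.append_right, Pi.zero_apply] at this
  refine le_trans (lambdaOne_le _ _ v hvne) ?_
  have hcoe : (fun j => ((v j : ℝ))) = Fin.append (fun k : Fin m => (-(p k : ℝ)))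
      (fun j : Fin n => ((q j : ℝ))) := by
    funext k
    cases k using Fin.addCases with
    | left i => rw [Fin.append_left, hv, Fin.append_left]; push_cast; ring
    | right j => rw [Fin.append_right, hv, Fin.append_right]
  rw [hcoe, AMat_mulVec]
  rw [pi_norm_le_iff_of_nonneg hδ.le]
  intro k
  cases k using Fin.addCases with
  | left i =>
    rw [Fin.append_left, Real.norm_eq_abs, abs_mul, Real.abs_exp]
    have : |(-(p i : ℝ)) + ∑ j, θ i j * ((q j : ℝ))| = |(∑ j, θ i j * ((q j : ℝ))) - ((p i : ℝ))| := by
      congr 1; ring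
    rw [this]; exact h1 i
  | right j =>
    rw [Fin.append_right, Real.norm_eq_abs, abs_mul, Real.abs_exp]
    exact h2 j

lemma exists_of_hOne_lt (hm : 0 < m) (hn : 0 < n) (θ : Fin m → Fin n → ℝ) (τ δ : ℝ)
    (hτ : 0 ≤ τ) (hδ : 0 < δ) (hδ1 : δ ≤ 1) (h : hOne m n θ τ < Real.log δ) :
    ∃ (p : Fin m → ℤ) (q : Fin n → ℤ), q ≠ 0 ∧
      (∀ k, |(∑ j, θ k j * ((q j : ℝ))) - ((p k : ℝ))| < δ * Real.exp (-(τ/(m:ℝ)))) ∧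
      (∀ j, |((q j : ℝ))| < δ * Real.exp (τ/(n:ℝ))) := by
  have hlam : lambdaOne (m+n) (gMat m n τ * uMat m n θ) < δ := by
    have hpos := lambdaOne_pos hm hn θ τ
    have h' := Real.exp_lt_exp.2 h
    simp only [hOne] at h'
    rwa [Real.exp_log hpos, Real.exp_log hδ] at h'
  obtain ⟨v, hvne, hvlt⟩ := exists_lt_of_lambdaOne_lt _ (by omega) _ hlam
  rw [coe_decomp v, AMat_mulVec] at hvlt
  set p' : Fin m → ℤ := fun k => v (Fin.castAdd n k) with hp'
  set q : Fin n → ℤ := fun j => v (Fin.natAdd m j) with hq'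
  have hcomp : ∀ k : Fin (m+n), ‖(Fin.append (fun k => Real.exp (τ/(m:ℝ)) * (((p' k : ℝ)) + ∑ j, θ k j * ((q j : ℝ))))
      (fun j => Real.exp (-τ/(n:ℝ)) * ((q j : ℝ)))) k‖ < δ :=
    fun k => lt_of_le_of_lt (norm_le_pi_norm _ k) hvlt
  have hq : q ≠ 0 := by
    intro hc
    have hp : ∃ k : Fin m, p' k ≠ 0 := by
      by_contra hcn
      push_neg at hcn
      apply hvne; funext k
      cases k using Fin.addCases with
      | left i => exact hcn i
      | right j => exact congrFun hc j
    obtain ⟨k, hk⟩ := hp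
    have := hcomp (Fin.castAdd n k)
    rw [Fin.append_left, Real.norm_eq_abs, abs_mul, Real.abs_exp] at this
    have hz : ∀ j : Fin n, ((q j : ℝ)) = 0 := by
      intro j; have := congrFun hc j; simp only [Pi.zero_apply] at this; exact_mod_cast this
    simp only [hz, mul_zero, Finset.sum_const_zero, add_zero] at this
    have h1 : (1:ℝ) ≤ |((p' k : ℝ))| := by
      rw [← Int.cast_abs]; exact_mod_cast Int.one_le_abs hk
    have he : (1:ℝ) ≤ Real.exp (τ/(m:ℝ)) := Real.one_le_exp (by positivity)
    nlinarith
  refine ⟨fun k => -p' k, q, hq, fun k => ?_, fun j => ?_⟩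
  · have := hcomp (Fin.castAdd n k)
    rw [Fin.append_left, Real.norm_eq_abs, abs_mul, Real.abs_exp] at this
    have heq : |(∑ j, θ k j * ((q j : ℝ))) - (((-p' k : ℤ) : ℝ))| = |((p' k : ℝ)) + ∑ j, θ k j * ((q j : ℝ))| := by
      push_cast; congr 1; ring
    rw [heq]
    have key : Real.exp (-(τ/(m:ℝ))) * Real.exp (τ/(m:ℝ)) = 1 := by
      rw [← Real.exp_add, show -(τ/(m:ℝ)) + τ/(m:ℝ) = 0 by ring, Real.exp_zero]
    have h2 := mul_lt_mul_of_pos_left this (Real.exp_pos (-(τ/(m:ℝ))))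
    calc |((p' k : ℝ)) + ∑ j, θ k j * ((q j : ℝ))|
        = Real.exp (-(τ/(m:ℝ))) * (Real.exp (τ/(m:ℝ)) * |((p' k : ℝ)) + ∑ j, θ k j * ((q j : ℝ))|) := by
          rw [← mul_assoc, key, one_mul]
      _ < Real.exp (-(τ/(m:ℝ))) * δ := h2
      _ = δ * Real.exp (-(τ/(m:ℝ))) := mul_comm _ _
  · have := hcomp (Fin.natAdd m j)
    rw [Fin.append_right, Real.norm_eq_abs, abs_mul, Real.abs_exp] at this
    have key : Real.exp (τ/(n:ℝ)) * Real.exp (-τ/(n:ℝ)) = 1 := by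
      rw [← Real.exp_add, show τ/(n:ℝ) + -τ/(n:ℝ) = 0 by ring, Real.exp_zero]
    have h2 := mul_lt_mul_of_pos_left this (Real.exp_pos (τ/(n:ℝ)))
    calc |((q j : ℝ))|
        = Real.exp (τ/(n:ℝ)) * (Real.exp (-τ/(n:ℝ)) * |((q j : ℝ))|) := by
          rw [← mul_assoc, key, one_mul]
      _ < Real.exp (τ/(n:ℝ)) * δ := h2
      _ = δ * Real.exp (τ/(n:ℝ)) := mul_comm _ _

lemma epow (c : ℝ) (k : ℕ) (hk : 0 < k) : Real.exp (c / (k:ℝ)) ^ k = Real.exp c := by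
  rw [← Real.exp_nat_mul]
  congr 1
  field_simp

end Stmt14Aux

open Stmt14Aux

/-- `Θ` is jointly `a`-singular if and only if
`limsup_{t→∞} min_{1≤i≤s} h_{θ_i,1}(a_i t) = −∞` (as an extended real limsup). -/
theorem stmt14 (s : ℕ) (hs : 2 ≤ s) (m n : Fin s → ℕ) (hm : ∀ i, 0 < m i) (hn : ∀ i, 0 < n i)
    (a : Fin s → ℝ) (ha : ∀ i, 0 < a i)
    (θ : ∀ i, Fin (m i) → Fin (n i) → ℝ) :
    JointlySingular m n a θ ↔
      Filter.limsup
        (fun t : ℝ => ((⨅ i, hOne (m i) (n i) (θ i) (a i * t) : ℝ) : EReal)) Filter.atTop = ⊥ := by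
  have hsne : Nonempty (Fin s) := ⟨⟨0, by omega⟩⟩
  constructor
  · -- JointlySingular → limsup = ⊥
    intro hsing
    rw [EReal.eq_bot_iff_forall_lt]
    intro M
    have hMlt : ((M - 1 : ℝ) : EReal) < (M : EReal) := by
      exact_mod_cast (by linarith : (M:ℝ) - 1 < M)
    refine lt_of_le_of_lt (Filter.limsup_le_of_le (h := ?_)) hMlt
    set δ : ℝ := min (1/2) (Real.exp (M - 1)) with hδdef
    have hδpos : 0 < δ := lt_min (by norm_num) (Real.exp_pos _)
    have hδ1 : δ ≤ 1 := le_trans (min_le_left _ _) (by norm_num)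
    have hlogδ : Real.log δ ≤ M - 1 := by
      calc Real.log δ ≤ Real.log (Real.exp (M - 1)) :=
            Real.log_le_log hδpos (min_le_right _ _)
        _ = M - 1 := Real.log_exp _
    set σ : ℝ := ∑ i, (n i : ℝ) * Real.log δ⁻¹ / a i with hσdef
    have hloginv : 0 ≤ Real.log δ⁻¹ := Real.log_nonneg (one_le_inv_iff₀.2 ⟨hδpos, hδ1⟩)
    have hterm : ∀ i, 0 ≤ (n i : ℝ) * Real.log δ⁻¹ / a i := by
      intro i
      have := (ha i)
      positivity
    have hσ0 : 0 ≤ σ := Finset.sum_nonneg fun i _ => hterm i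
    have hσi : ∀ i, (n i : ℝ) * Real.log δ⁻¹ / a i ≤ σ := fun i =>
      Finset.single_le_sum (fun j _ => hterm j) (Finset.mem_univ i)
    have key_n : ∀ i, Real.exp (-(a i * σ)) ≤ δ ^ (n i) := by
      intro i
      have h1 : (n i : ℝ) * Real.log δ⁻¹ ≤ a i * σ := by
        have h2 := hσi i
        rw [div_le_iff₀ (ha i)] at h2
        linarith
      rw [Real.log_inv] at h1
      have h3 : Real.exp (-(a i * σ)) ≤ Real.exp ((n i : ℝ) * Real.log δ) := by
        apply Real.exp_le_exp.2; nlinarith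
      rwa [Real.exp_nat_mul, Real.exp_log hδpos] at h3
    set ε : ℝ := Finset.univ.inf' Finset.univ_nonempty
      (fun i => δ ^ (m i) * Real.exp (-(a i * σ))) with hεdef
    have hεpos : 0 < ε := by
      rw [hεdef, Finset.lt_inf'_iff]
      intro i _; positivity
    have hεle : ∀ i, ε ≤ δ ^ (m i) * Real.exp (-(a i * σ)) := fun i =>
      Finset.inf'_le _ (Finset.mem_univ i)
    obtain ⟨C, hC⟩ := hsing ε hεpos
    rw [Filter.eventually_atTop]
    refine ⟨σ + Real.log (max C 1) + 1, fun t ht => ?_⟩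
    have hR : C < Real.exp (t - σ) := by
      have h1 : Real.log (max C 1) < t - σ := by linarith
      have h2 := Real.exp_lt_exp.2 h1
      rw [Real.exp_log (lt_of_lt_of_le one_pos (le_max_right C 1))] at h2
      exact lt_of_le_of_lt (le_max_left C 1) h2
    have hmem := hC (Set.mem_Ioi.2 hR)
    rw [QSetW, Set.mem_iUnion] at hmem
    obtain ⟨i, hmem⟩ := hmem
    rw [Set.mem_image] at hmem
    obtain ⟨Q, hQmem, hQR⟩ := hmem
    obtain ⟨hQ1, p, q, hbound, hqpos, hqle⟩ := hQmem
    have hQpos : (0:ℝ) < Q := lt_of_lt_of_le one_pos hQ1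
    have hQ : Q = Real.exp (a i * (t - σ)) := by
      have h1 : Q = (Q ^ (1/a i)) ^ (a i) := by
        rw [← Real.rpow_mul hQpos.le, one_div_mul_cancel (ha i).ne', Real.rpow_one]
      rw [hQR, Real.rpow_def_of_pos (Real.exp_pos _), Real.log_exp, mul_comm (t - σ) (a i)] at h1
      exact h1
    have hqne : q ≠ 0 := by
      intro hc
      have hz : (fun j : Fin (n i) => ((q j : ℝ))) = (0 : Fin (n i) → ℝ) := by
        funext j; rw [hc]; simp
      rw [hz, norm_zero, zero_pow (hn i).ne'] at hqpos
      exact lt_irrefl 0 hqpos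
    -- the two component bounds
    set τ : ℝ := a i * t with hτdef
    have hbig : Real.exp τ * (ε * Q⁻¹) ≤ δ ^ (m i) := by
      calc Real.exp τ * (ε * Q⁻¹)
          = ε * (Real.exp (a i * t) * Real.exp (-(a i * (t - σ)))) := by
            rw [hQ, ← Real.exp_neg]; ring
        _ = ε * Real.exp (a i * σ) := by
            rw [← Real.exp_add, show a i * t + -(a i * (t - σ)) = a i * σ by ring]
        _ ≤ (δ ^ (m i) * Real.exp (-(a i * σ))) * Real.exp (a i * σ) :=
            mul_le_mul_of_nonneg_right (hεle i) (Real.exp_pos _).le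
        _ = δ ^ (m i) := by
            rw [mul_assoc, ← Real.exp_add, show -(a i * σ) + a i * σ = 0 by ring,
              Real.exp_zero, mul_one]
    have h1k : ∀ k, Real.exp (τ/(m i : ℝ)) * |(∑ j, θ i k j * ((q j : ℝ))) - ((p k : ℝ))| ≤ δ := by
      intro k
      have hX : |(∑ j, θ i k j * ((q j : ℝ))) - ((p k : ℝ))| ≤
          ‖(fun k => (∑ j, θ i k j * (q j : ℝ)) - (p k : ℝ) : Fin (m i) → ℝ)‖ := by
        have := norm_le_pi_norm (fun k => (∑ j, θ i k j * (q j : ℝ)) - (p k : ℝ) : Fin (m i) → ℝ) k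
        rwa [Real.norm_eq_abs] at this
      have hpow : (Real.exp (τ/(m i : ℝ)) * |(∑ j, θ i k j * ((q j : ℝ))) - ((p k : ℝ))|) ^ (m i)
          < δ ^ (m i) := by
        calc (Real.exp (τ/(m i : ℝ)) * |(∑ j, θ i k j * ((q j : ℝ))) - ((p k : ℝ))|) ^ (m i)
            = Real.exp τ * |(∑ j, θ i k j * ((q j : ℝ))) - ((p k : ℝ))| ^ (m i) := by
              rw [mul_pow, epow τ (m i) (hm i)]
          _ ≤ Real.exp τ * ‖(fun k => (∑ j, θ i k j * (q j : ℝ)) - (p k : ℝ) : Fin (m i) → ℝ)‖ ^ (m i) :=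
              mul_le_mul_of_nonneg_left (pow_le_pow_left₀ (abs_nonneg _) hX _) (Real.exp_pos _).le
          _ < Real.exp τ * (ε * Q⁻¹) := mul_lt_mul_of_pos_left hbound (Real.exp_pos _)
          _ ≤ δ ^ (m i) := hbig
      exact (lt_of_pow_lt_pow_left₀ (m i) hδpos.le hpow).le
    have h2j : ∀ j, Real.exp (-τ/(n i : ℝ)) * |((q j : ℝ))| ≤ δ := by
      intro j
      have hX : |((q j : ℝ))| ≤ ‖(fun j => ((q j : ℝ)) : Fin (n i) → ℝ)‖ := by
        have := norm_le_pi_norm (fun j => ((q j : ℝ)) : Fin (n i) → ℝ) j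
        rwa [Real.norm_eq_abs] at this
      have hpow : (Real.exp (-τ/(n i : ℝ)) * |((q j : ℝ))|) ^ (n i) ≤ δ ^ (n i) := by
        calc (Real.exp (-τ/(n i : ℝ)) * |((q j : ℝ))|) ^ (n i)
            = Real.exp (-τ) * |((q j : ℝ))| ^ (n i) := by
              rw [mul_pow, show -τ/(n i : ℝ) = (-τ)/(n i : ℝ) by ring, epow (-τ) (n i) (hn i)]
          _ ≤ Real.exp (-τ) * ‖(fun j => ((q j : ℝ)) : Fin (n i) → ℝ)‖ ^ (n i) :=
              mul_le_mul_of_nonneg_left (pow_le_pow_left₀ (abs_nonneg _) hX _) (Real.exp_pos _).le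
          _ ≤ Real.exp (-τ) * Q := mul_le_mul_of_nonneg_left hqle (Real.exp_pos _).le
          _ = Real.exp (-(a i * σ)) := by
              rw [hQ, ← Real.exp_add, show -τ + a i * (t - σ) = -(a i * σ) by rw [hτdef]; ring]
          _ ≤ δ ^ (n i) := key_n i
      exact le_of_pow_le_pow_left₀ (hn i).ne' hδpos.le hpow
    have hle := hOne_le (hm i) (hn i) (θ i) τ δ hδpos p q hqne h1k h2j
    show ((⨅ j, hOne (m j) (n j) (θ j) (a j * t) : ℝ) : EReal) ≤ ((M - 1 : ℝ) : EReal)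
    rw [EReal.coe_le_coe_iff]
    refine le_trans (ciInf_le (Set.Finite.bddBelow (Set.finite_range _)) i) ?_
    exact le_trans hle hlogδ
  · -- limsup = ⊥ → JointlySingular
    intro h ε hε
    set δ : ℝ := min 1 ε with hδdef
    have hδpos : 0 < δ := lt_min one_pos hε
    have hδ1 : δ ≤ 1 := min_le_left _ _
    have hδε : δ ≤ ε := min_le_right _ _
    have hev : ∀ᶠ t in Filter.atTop,
        ((⨅ i, hOne (m i) (n i) (θ i) (a i * t) : ℝ) : EReal) < ((Real.log δ : ℝ) : EReal) := by
      apply Filter.eventually_lt_of_limsup_lt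
      · rw [h]
        exact EReal.bot_lt_coe _
      · isBoundedDefault
    obtain ⟨T, hT⟩ := Filter.eventually_atTop.1 hev
    refine ⟨max (Real.exp T) 1, fun R hR => ?_⟩
    rw [Set.mem_Ioi] at hR
    have hRpos : (0:ℝ) < R := lt_of_lt_of_le one_pos (le_trans (le_max_right _ _) hR.le)
    set t : ℝ := Real.log R with htdef
    have ht : T < t := by
      have := Real.log_lt_log (Real.exp_pos T) (lt_of_le_of_lt (le_max_left _ _) hR)
      rwa [Real.log_exp] at this
    have ht0 : 0 < t := Real.log_pos (lt_of_le_of_lt (le_max_right _ _) hR)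
    have hu := hT t ht.le
    rw [EReal.coe_lt_coe_iff] at hu
    obtain ⟨i, -, hi⟩ := Finset.exists_min_image Finset.univ
      (fun i => hOne (m i) (n i) (θ i) (a i * t)) ⟨⟨0, by omega⟩, Finset.mem_univ _⟩
    have hfi : hOne (m i) (n i) (θ i) (a i * t) < Real.log δ :=
      lt_of_le_of_lt (le_ciInf fun j => hi j (Finset.mem_univ j)) hu
    set τ : ℝ := a i * t with hτdef
    have hτ0 : 0 ≤ τ := le_of_lt (mul_pos (ha i) ht0)
    obtain ⟨p, q, hqne, h1, h2⟩ := exists_of_hOne_lt (hm i) (hn i) (θ i) τ δ hτ0 hδpos hδ1 hfi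
    set Q : ℝ := Real.exp τ with hQdef
    rw [QSetW, Set.mem_iUnion]
    refine ⟨i, Set.mem_image _ _ _ |>.2 ⟨Q, ⟨Real.one_le_exp hτ0, p, q, ?_, ?_, ?_⟩, ?_⟩⟩
    · -- ‖θq - p‖ ^ m < ε * Q⁻¹
      have hvec : ‖(fun k => (∑ j, θ i k j * (q j : ℝ)) - (p k : ℝ) : Fin (m i) → ℝ)‖
          < δ * Real.exp (-(τ/(m i : ℝ))) := by
        rw [pi_norm_lt_iff (by positivity)]
        intro k
        rw [Real.norm_eq_abs]
        exact h1 k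
      calc ‖(fun k => (∑ j, θ i k j * (q j : ℝ)) - (p k : ℝ) : Fin (m i) → ℝ)‖ ^ (m i)
          < (δ * Real.exp (-(τ/(m i : ℝ)))) ^ (m i) :=
            pow_lt_pow_left₀ hvec (norm_nonneg _) (hm i).ne'
        _ = δ ^ (m i) * Real.exp (-τ) := by
            rw [mul_pow, show -(τ/(m i : ℝ)) = (-τ)/(m i : ℝ) by ring, epow (-τ) (m i) (hm i)]
        _ ≤ ε * Real.exp (-τ) := by
            have hδm : δ ^ (m i) ≤ δ := by
              calc δ ^ (m i) ≤ δ ^ 1 := pow_le_pow_of_le_one hδpos.le hδ1 (hm i)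
                _ = δ := pow_one δ
            exact mul_le_mul_of_nonneg_right (le_trans hδm hδε) (Real.exp_pos _).le
        _ = ε * Q⁻¹ := by rw [hQdef, ← Real.exp_neg]
    · -- 0 < ‖q‖ ^ n
      obtain ⟨j, hj⟩ := Function.ne_iff.1 hqne
      have h1' : (1:ℝ) ≤ |((q j : ℝ))| := by
        rw [← Int.cast_abs]; exact_mod_cast Int.one_le_abs hj
      have : (1:ℝ) ≤ ‖(fun j => ((q j : ℝ)) : Fin (n i) → ℝ)‖ := by
        refine le_trans h1' ?_
        have := norm_le_pi_norm (fun j => ((q j : ℝ)) : Fin (n i) → ℝ) j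
        rwa [Real.norm_eq_abs] at this
      positivity
    · -- ‖q‖ ^ n ≤ Q
      have hvec : ‖(fun j => ((q j : ℝ)) : Fin (n i) → ℝ)‖ ≤ δ * Real.exp (τ/(n i : ℝ)) := by
        rw [pi_norm_le_iff_of_nonneg (by positivity)]
        intro j
        rw [Real.norm_eq_abs]
        exact (h2 j).le
      calc ‖(fun j => ((q j : ℝ)) : Fin (n i) → ℝ)‖ ^ (n i)
          ≤ (δ * Real.exp (τ/(n i : ℝ))) ^ (n i) := pow_le_pow_left₀ (norm_nonneg _) hvec _
        _ = δ ^ (n i) * Real.exp τ := by rw [mul_pow, epow τ (n i) (hn i)]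
        _ ≤ 1 * Real.exp τ := by
            have : δ ^ (n i) ≤ 1 := pow_le_one₀ hδpos.le hδ1
            exact mul_le_mul_of_nonneg_right this (Real.exp_pos _).le
        _ = Q := by rw [one_mul]
    · -- Q ^ (1/a i) = R
      show Q ^ (1 / a i) = R
      rw [hQdef, hτdef, Real.rpow_def_of_pos (Real.exp_pos _), Real.log_exp,
        show a i * t * (1 / a i) = t by rw [mul_comm (a i) t, mul_assoc, mul_one_div, div_self (ha i).ne', mul_one], htdef, Real.exp_log hRpos]
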